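/- Assume Ĝ(t) ≤ c₀ e^{−c|t|} for all t ∈ ℝ, with constants c₀, c > 0. Let x ∈ [−1,1] and let {x_k}_{k=1}^∞ be a sequence of pairwise distinct points of [−1,1] with |x − x_k| < c/4 for all k. Then φ_x can be approximated in L²(ℝ, Ĝ(t)dt) with arbitrary accuracy by finite linear combinations of the functions φ_{x_k}; i.e., φ_x lies in the closed linear span of {φ_{x_k} : k ≥ 1}. -/

import Mathlib

open MeasureTheory Real Set Metric Filter

lemma aux_int_abs_pow_exp {δ : ℝ} (hδ : 0 < δ) (n : ℕ) :
    Integrable (fun t : ℝ => |t| ^ n * Real.exp (-δ * |t|)) := by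
  have hIoi : IntegrableOn (fun t : ℝ => |t| ^ n * Real.exp (-δ * |t|)) (Ioi 0) := by
    have h := integrableOn_rpow_mul_exp_neg_mul_rpow (p := 1) (s := n) (b := δ)
      (by exact_mod_cast neg_one_lt_zero.trans_le (Nat.cast_nonneg n)) zero_lt_one hδ
    refine h.congr_fun (fun x hx => ?_) measurableSet_Ioi
    have hx0 : (0:ℝ) < x := hx
    simp only [Real.rpow_one, Real.rpow_natCast, abs_of_pos hx0]
  rw [← integrableOn_univ, ← Set.Iio_union_Ici (a := (0:ℝ)), integrableOn_union,
    integrableOn_Ici_iff_integrableOn_Ioi]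
  refine ⟨?_, hIoi⟩
  rw [← (Measure.measurePreserving_neg (volume : Measure ℝ)).integrableOn_comp_preimage
      (Homeomorph.neg ℝ).measurableEmbedding]
  simp only [Function.comp_def, abs_neg, neg_preimage, neg_Iio, neg_zero]
  exact hIoi

-- weight function is in L²(μ)
lemma aux_memLp_weight (Ghat : ℝ → ℝ) (hcont : Continuous Ghat)
    (hpos : ∀ t, 0 < Ghat t)
    (c₀ c : ℝ) (hc₀ : 0 < c₀) (hc : 0 < c)
    (hdecay : ∀ t : ℝ, Ghat t ≤ c₀ * Real.exp (-c * |t|))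
    (a : ℝ) (ha : 0 ≤ a) (hac : 2 * a < c) :
    MemLp (fun t : ℝ => (|t| + 1) * Real.exp (a * |t|)) 2
      (volume.withDensity (fun t => ENNReal.ofReal (Ghat t))) := by
  have hcont2 : Continuous (fun t : ℝ => (|t| + 1) * Real.exp (a * |t|)) :=
    (_root_.continuous_abs.add continuous_const).mul ((continuous_const.mul _root_.continuous_abs).rexp)
  rw [memLp_two_iff_integrable_sq hcont2.aestronglyMeasurable]
  rw [integrable_withDensity_iff hcont.measurable.ennreal_ofReal
      (Filter.Eventually.of_forall fun t => ENNReal.ofReal_lt_top)]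
  set δ : ℝ := c - 2 * a with hδdef
  have hδ : 0 < δ := by simp only [hδdef, sub_pos]; linarith
  have hG : Integrable (fun t : ℝ => c₀ * ((|t| + 1) ^ 2 * Real.exp (-δ * |t|))) := by
    have h2 := aux_int_abs_pow_exp hδ 2
    have h1 := aux_int_abs_pow_exp hδ 1
    have h0 := aux_int_abs_pow_exp hδ 0
    refine (((h2.add (h1.const_mul 2)).add h0).const_mul c₀).congr
      (Filter.Eventually.of_forall fun t => ?_)
    simp only [Pi.add_apply]
    set E := Real.exp (-δ * |t|) with hE
    ring
  refine hG.mono' ?_ (Filter.Eventually.of_forall fun t => ?_)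
  · have : (fun t : ℝ => ((|t| + 1) * Real.exp (a * |t|)) ^ 2
        * (ENNReal.ofReal (Ghat t)).toReal)
        = fun t : ℝ => ((|t| + 1) * Real.exp (a * |t|)) ^ 2 * Ghat t := by
      funext t; rw [ENNReal.toReal_ofReal (hpos t).le]
    rw [this]
    exact ((hcont2.pow 2).mul hcont).aestronglyMeasurable
  · rw [ENNReal.toReal_ofReal (hpos t).le, Real.norm_eq_abs,
      _root_.abs_of_nonneg (mul_nonneg (by positivity) (hpos t).le)]
    have h1 : ((|t| + 1) * Real.exp (a * |t|)) ^ 2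
        = (|t| + 1) ^ 2 * Real.exp (2 * a * |t|) := by
      rw [mul_pow]; congr 1; rw [sq, ← Real.exp_add]; congr 1; ring
    rw [h1]
    calc (|t| + 1) ^ 2 * Real.exp (2 * a * |t|) * Ghat t
        ≤ (|t| + 1) ^ 2 * Real.exp (2 * a * |t|) * (c₀ * Real.exp (-c * |t|)) :=
          mul_le_mul_of_nonneg_left (hdecay t) (by positivity)
      _ = c₀ * ((|t| + 1) ^ 2 * Real.exp (-δ * |t|)) := by
          rw [show (-δ * |t|) = 2 * a * |t| + -c * |t| by simp only [hδdef]; ring,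
            Real.exp_add]
          ring

/-- If `Ĝ(t) ≤ c₀ e^{-c|t|}` and `{x_k}` is a sequence of pairwise distinct points
of `[-1,1]` with `|x - x_k| < c/4` for all `k`, then `φ_x` lies in the closed linear span of
`{φ_{x_k} : k ≥ 1}` in `L²(ℝ, Ĝ(t)dt)`. -/
theorem exp_mem_closed_span_of_close_points
    (Ghat : ℝ → ℝ) (hcont : Continuous Ghat) (heven : ∀ t, Ghat (-t) = Ghat t)
    (hpos : ∀ t, 0 < Ghat t) (hint : Integrable Ghat)
    (c₀ c : ℝ) (hc₀ : 0 < c₀) (hc : 0 < c)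
    (hdecay : ∀ t : ℝ, Ghat t ≤ c₀ * Real.exp (-c * |t|))
    (μ : Measure ℝ) (hμ : μ = volume.withDensity (fun t => ENNReal.ofReal (Ghat t)))
    (φ : ℝ → Lp ℂ 2 μ)
    (hφ : ∀ x : ℝ, (φ x : ℝ → ℂ) =ᵐ[μ]
      fun t => Complex.exp (Complex.I * (x : ℂ) * (t : ℂ)))
    (x : ℝ) (hx : x ∈ Set.Icc (-1 : ℝ) 1)
    (xs : ℕ → ℝ) (hxs : ∀ k, xs k ∈ Set.Icc (-1 : ℝ) 1)
    (hdist : Function.Injective xs)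
    (hclose : ∀ k, |x - xs k| < c / 4) :
    φ x ∈ closure ((Submodule.span ℂ (Set.range fun k => φ (xs k)) :
      Submodule ℂ (Lp ℂ 2 μ)) : Set (Lp ℂ 2 μ)) := by
  classical
  rw [← Submodule.topologicalClosure_coe, ← Submodule.orthogonal_orthogonal_eq_closure,
    SetLike.mem_coe, Submodule.mem_orthogonal]
  intro ψ hψ
  set g : ℝ → ℂ := fun t => (starRingEnd ℂ) ((ψ : ℝ → ℂ) t) with hg
  have hgm : AEStronglyMeasurable g μ :=
    RCLike.continuous_conj.comp_aestronglyMeasurable (Lp.aestronglyMeasurable ψ)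
  set F : ℂ → ℂ := fun z => ∫ t, g t * Complex.exp (Complex.I * z * (t : ℂ)) ∂μ with hF
  -- the inner product with φ y is F y
  have hinner : ∀ y : ℝ, (inner ℂ ψ (φ y) : ℂ) = F ((y : ℝ) : ℂ) := by
    intro y
    rw [MeasureTheory.L2.inner_def]
    refine integral_congr_ae ?_
    filter_upwards [hφ y] with t ht
    rw [RCLike.inner_apply, ht, mul_comm]
  -- F vanishes at the points xs k
  have hzero : ∀ k, F ((xs k : ℝ) : ℂ) = 0 := by
    intro k
    rw [← hinner (xs k), ← inner_conj_symm]
    rw [hψ (φ (xs k)) (Submodule.subset_span ⟨k, rfl⟩)]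
    simp
  -- norm of the exponential
  have hnormexp : ∀ (z : ℂ) (t : ℝ),
      ‖Complex.exp (Complex.I * z * (t : ℂ))‖ = Real.exp (-(z.im * t)) := by
    intro z t
    rw [Complex.norm_exp]
    congr 1
    simp [Complex.mul_re, Complex.mul_im]
  -- differentiability of F on the strip
  have hdiff : ∀ z₀ : ℂ, |z₀.im| < c / 2 → DifferentiableAt ℂ F z₀ := by
    intro z₀ hz₀
    set a : ℝ := (|z₀.im| + c / 2) / 2 with hadef
    have ha0 : 0 ≤ a := by positivity
    have haim : |z₀.im| < a := by simp only [hadef]; linarith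
    have hac2 : a < c / 2 := by simp only [hadef]; linarith
    have hac : 2 * a < c := by linarith
    set ε : ℝ := a - |z₀.im| with hε
    have hε0 : 0 < ε := by simp only [hε]; linarith
    have him : ∀ z ∈ Metric.ball z₀ ε, |z.im| ≤ a := by
      intro z hz
      have h1 : |z.im - z₀.im| ≤ ‖z - z₀‖ := by
        simpa using Complex.abs_im_le_norm (z - z₀)
      have h2 : ‖z - z₀‖ < ε := by
        rw [← Complex.dist_eq]; exact Metric.mem_ball.mp hz
      have := abs_sub_abs_le_abs_sub z.im z₀.im
      simp only [hε] at h2 ⊢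
      linarith [abs_sub_abs_le_abs_sub z.im z₀.im]
    -- the L² weight and the bound
    have hw : MemLp (fun t : ℝ => (|t| + 1) * Real.exp (a * |t|)) 2 μ := by
      rw [hμ]; exact aux_memLp_weight Ghat hcont hpos c₀ c hc₀ hc hdecay a ha0 hac
    have hψ2 : MemLp (fun t => ‖(ψ : ℝ → ℂ) t‖) 2 μ := (Lp.memLp ψ).norm
    set bound : ℝ → ℝ := fun t => ((|t| + 1) * Real.exp (a * |t|)) * ‖(ψ : ℝ → ℂ) t‖
      with hbdef
    have hbound_int : Integrable bound μ := by
      have hpqr : (1 : ENNReal) / 1 = 1 / 2 + 1 / 2 := by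
        rw [ENNReal.add_halves, one_div_one]
      have h := hψ2.smul hw (r := 1)
      rw [memLp_one_iff_integrable] at h
      exact h.congr (Filter.Eventually.of_forall fun t => by
        simp [hbdef, smul_eq_mul])
    -- pointwise bounds
    have hb1 : ∀ z ∈ Metric.ball z₀ ε, ∀ t : ℝ,
        ‖g t * Complex.exp (Complex.I * z * (t : ℂ))‖ ≤ bound t := by
      intro z hz t
      rw [norm_mul, hnormexp]
      have hg1 : ‖g t‖ = ‖(ψ : ℝ → ℂ) t‖ := RCLike.norm_conj _
      rw [hg1]
      have hexp : Real.exp (-(z.im * t)) ≤ Real.exp (a * |t|) := by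
        apply Real.exp_le_exp.mpr
        calc -(z.im * t) ≤ |z.im * t| := neg_le_abs _
          _ = |z.im| * |t| := abs_mul _ _
          _ ≤ a * |t| := mul_le_mul_of_nonneg_right (him z hz) (abs_nonneg t)
      have h1t : Real.exp (a * |t|) ≤ (|t| + 1) * Real.exp (a * |t|) := by
        nlinarith [Real.exp_pos (a * |t|), abs_nonneg t]
      calc ‖(ψ : ℝ → ℂ) t‖ * Real.exp (-(z.im * t))
          ≤ ‖(ψ : ℝ → ℂ) t‖ * ((|t| + 1) * Real.exp (a * |t|)) := by
            exact mul_le_mul_of_nonneg_left (hexp.trans h1t) (norm_nonneg _)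
        _ = bound t := by rw [hbdef]; ring
    have hb2 : ∀ z ∈ Metric.ball z₀ ε, ∀ t : ℝ,
        ‖g t * (Complex.I * (t : ℂ) * Complex.exp (Complex.I * z * (t : ℂ)))‖
          ≤ bound t := by
      intro z hz t
      rw [norm_mul, norm_mul, norm_mul, hnormexp, RCLike.norm_conj]
      simp only [Complex.norm_I, Complex.norm_real, one_mul, Real.norm_eq_abs]
      have hexp : Real.exp (-(z.im * t)) ≤ Real.exp (a * |t|) := by
        apply Real.exp_le_exp.mpr
        calc -(z.im * t) ≤ |z.im * t| := neg_le_abs _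
          _ = |z.im| * |t| := abs_mul _ _
          _ ≤ a * |t| := mul_le_mul_of_nonneg_right (him z hz) (abs_nonneg t)
      calc ‖(ψ : ℝ → ℂ) t‖ * (|t| * Real.exp (-(z.im * t)))
          ≤ ‖(ψ : ℝ → ℂ) t‖ * ((|t| + 1) * Real.exp (a * |t|)) := by
            refine mul_le_mul_of_nonneg_left ?_ (norm_nonneg _)
            have := Real.exp_pos (a * |t|)
            nlinarith [abs_nonneg t, Real.exp_pos (-(z.im * t))]
        _ = bound t := by rw [hbdef]; ring
    have hmeasz : ∀ z : ℂ, AEStronglyMeasurable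
        (fun t : ℝ => g t * Complex.exp (Complex.I * z * (t : ℂ))) μ := by
      intro z
      exact hgm.mul ((Complex.continuous_exp.comp
        (continuous_const.mul Complex.continuous_ofReal)).aestronglyMeasurable)
    have key := hasDerivAt_integral_of_dominated_loc_of_deriv_le (μ := μ)
      (F := fun z t => g t * Complex.exp (Complex.I * z * (t : ℂ)))
      (F' := fun z t => g t * (Complex.I * (t : ℂ)
        * Complex.exp (Complex.I * z * (t : ℂ))))
      (x₀ := z₀) (bound := bound) (Metric.ball_mem_nhds z₀ hε0)
      (Filter.Eventually.of_forall fun z => hmeasz z)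
      (Integrable.mono' hbound_int (hmeasz z₀)
        (Filter.Eventually.of_forall fun t => hb1 z₀ (Metric.mem_ball_self hε0) t))
      (hgm.mul (((continuous_const.mul Complex.continuous_ofReal).mul
        (Complex.continuous_exp.comp
          (continuous_const.mul Complex.continuous_ofReal))).aestronglyMeasurable))
      (Filter.Eventually.of_forall fun t => fun z hz => hb2 z hz t)
      hbound_int
      (Filter.Eventually.of_forall fun t => fun z hz => ?_)
    · exact key.2.differentiableAt
    · -- HasDerivAt (fun z => g t * exp (I z t)) (g t * (I t exp (I z t))) z
      have h1 : HasDerivAt (fun w : ℂ => Complex.I * w * (t : ℂ))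
          (Complex.I * 1 * (t : ℂ)) z :=
        ((hasDerivAt_id z).const_mul Complex.I).mul_const _
      have h2 := (h1.cexp).const_mul (g t)
      exact h2.congr_deriv (by ring)
  -- cluster point
  obtain ⟨xstar, hxstarIcc, k, hkmono, hklim⟩ := isCompact_Icc.tendsto_subseq hxs
  have hballdiff : DifferentiableOn ℂ F (Metric.ball ((xstar : ℝ) : ℂ) (c / 2)) := by
    intro z hz
    refine (hdiff z ?_).differentiableWithinAt
    have h1 : |z.im| = |(z - ((xstar : ℝ) : ℂ)).im| := by simp
    have h2 : |(z - ((xstar : ℝ) : ℂ)).im| ≤ ‖z - ((xstar : ℝ) : ℂ)‖ :=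
      Complex.abs_im_le_norm _
    have h3 : ‖z - ((xstar : ℝ) : ℂ)‖ < c / 2 := by
      rw [← Complex.dist_eq]; exact Metric.mem_ball.mp hz
    linarith [h1 ▸ h2]
  have hanalytic := hballdiff.analyticOnNhd Metric.isOpen_ball
  -- frequent zeros near xstar
  have hfreq : ∃ᶠ z in nhdsWithin ((xstar : ℝ) : ℂ) {((xstar : ℝ) : ℂ)}ᶜ, F z = 0 := by
    have hne : ∀ᶠ j in Filter.atTop, ((xs (k j) : ℝ) : ℂ) ≠ ((xstar : ℝ) : ℂ) := by
      rcases em (∃ j₀, xs (k j₀) = xstar) with ⟨j₀, hj₀⟩ | hno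
      · filter_upwards [Filter.eventually_gt_atTop j₀] with j hj
        intro hEq
        have : xs (k j) = xstar := by exact_mod_cast hEq
        have : k j = k j₀ := hdist (this.trans hj₀.symm)
        exact absurd (hkmono.injective this) hj.ne'
      · exact Filter.Eventually.of_forall fun j hEq =>
          hno ⟨j, by exact_mod_cast hEq⟩
    have htend : Filter.Tendsto (fun j => ((xs (k j) : ℝ) : ℂ)) Filter.atTop
        (nhdsWithin ((xstar : ℝ) : ℂ) {((xstar : ℝ) : ℂ)}ᶜ) := by
      refine tendsto_nhdsWithin_of_tendsto_nhds_of_eventually_within _ ?_ hne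
      exact (Complex.continuous_ofReal.tendsto _).comp hklim
    exact htend.frequently ((Filter.Eventually.of_forall
      fun j => hzero (k j)).frequently)
  have hEqOn := hanalytic.eqOn_zero_of_preconnected_of_frequently_eq_zero
    (convex_ball _ _).isPreconnected (Metric.mem_ball_self (by linarith)) hfreq
  -- x is in the ball
  have hxle : |x - xstar| ≤ c / 4 := by
    have htendabs : Filter.Tendsto (fun j => |x - xs (k j)|) Filter.atTop
        (nhds |x - xstar|) :=
      ((continuous_const.sub continuous_id).abs.tendsto _).comp hklim
    exact le_of_tendsto htendabs (Filter.Eventually.of_forall fun j =>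
      (hclose (k j)).le)
  have hxmem : ((x : ℝ) : ℂ) ∈ Metric.ball ((xstar : ℝ) : ℂ) (c / 2) := by
    rw [Metric.mem_ball, Complex.dist_eq]
    have h1 : ((x : ℝ) : ℂ) - ((xstar : ℝ) : ℂ) = ((x - xstar : ℝ) : ℂ) := by
      push_cast; ring
    rw [h1, Complex.norm_real, Real.norm_eq_abs]
    linarith
  rw [hinner x]
  simpa using hEqOn hxmem
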